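/- Let T be a stress-energy tensor on (N+1)-dimensional Minkowski space satisfying the dominant energy condition. Let e₀, e₁, …, e_N be an orthonormal frame for η in which e₀ is future-directed timelike, i.e., η(e₀,e₀) = -1, η(e_i,e_i) = 1 for i = 1,…,N, η(e_a,e_b) = 0 for a ≠ b, and (e₀)₀ > 0. Then the frame components of T satisfy |T(e_a,e_b)| ≤ T(e₀,e₀) for all a, b ∈ {0,1,…,N}. -/
import Mathlib


open Matrix

/-- The Minkowski metric `diag(-1,1,…,1)` on `ℝ^{N+1}`. -/
noncomputable def eta (N : ℕ) : Matrix (Fin (N+1)) (Fin (N+1)) ℝ :=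
  Matrix.diagonal (fun i => if i = 0 then (-1 : ℝ) else 1)

/-- The Minkowski bilinear form `η(x,y) = -x₀y₀ + ∑ᵢ xᵢyᵢ`. -/
noncomputable def mdot {N : ℕ} (x y : Fin (N+1) → ℝ) : ℝ :=
  x ⬝ᵥ (eta N).mulVec y

/-- Future-directed timelike: `η(v,v) < 0` and `v₀ > 0`. -/
def FDTimelike {N : ℕ} (v : Fin (N+1) → ℝ) : Prop :=
  mdot v v < 0 ∧ 0 < v 0

/-- Future-directed lightlike: `v ≠ 0`, `η(v,v) = 0` and `v₀ > 0`. -/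
def FDLightlike {N : ℕ} (v : Fin (N+1) → ℝ) : Prop :=
  v ≠ 0 ∧ mdot v v = 0 ∧ 0 < v 0

/-- Future-directed causal: future-directed timelike or lightlike. -/
def FDCausal {N : ℕ} (v : Fin (N+1) → ℝ) : Prop :=
  FDTimelike v ∨ FDLightlike v

/-- The bilinear form associated to a matrix: `T(v,w) = vᵀ T w`. -/
noncomputable def Tbil {N : ℕ} (T : Matrix (Fin (N+1)) (Fin (N+1)) ℝ)
    (v w : Fin (N+1) → ℝ) : ℝ :=
  v ⬝ᵥ T.mulVec w

/-- The endomorphism associated to a stress-energy tensor: `u(v) = -ηTv`. -/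
noncomputable def endo {N : ℕ} (T : Matrix (Fin (N+1)) (Fin (N+1)) ℝ)
    (v : Fin (N+1) → ℝ) : Fin (N+1) → ℝ :=
  -((eta N).mulVec (T.mulVec v))

/-- The dominant energy condition: every future-directed causal vector is
sent by the associated endomorphism to a future-directed causal vector or zero. -/
def DEC {N : ℕ} (T : Matrix (Fin (N+1)) (Fin (N+1)) ℝ) : Prop :=
  ∀ v : Fin (N+1) → ℝ, FDCausal v → FDCausal (endo T v) ∨ endo T v = 0

section AuxLemmas

open Finset

private lemma mdot_expand' {N : ℕ} (x y : Fin (N+1) → ℝ) :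
    mdot x y = -(x 0 * y 0) + ∑ i ∈ Finset.univ.erase 0, x i * y i := by
  have : mdot x y = ∑ i : Fin (N+1), x i * ((if i = 0 then (-1:ℝ) else 1) * y i) := by
    simp [mdot, eta, Matrix.mulVec_diagonal, dotProduct]
  rw [this, ← Finset.add_sum_erase _ _ (Finset.mem_univ (0 : Fin (N+1)))]
  congr 1
  · norm_num
  · exact Finset.sum_congr rfl (fun i hi => by
      rw [if_neg (Finset.mem_erase.mp hi).1]; ring)

private lemma causal_mdot_nonpos {N : ℕ} (v w : Fin (N+1) → ℝ)
    (hv : mdot v v ≤ 0) (hv0 : 0 < v 0)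
    (hw : mdot w w ≤ 0) (hw0 : 0 ≤ w 0) : mdot v w ≤ 0 := by
  have Ev := mdot_expand' v v
  have Ew := mdot_expand' w w
  have Evw := mdot_expand' v w
  set s := (Finset.univ.erase (0 : Fin (N+1))) with hs
  have hCS := Finset.sum_mul_sq_le_sq_mul_sq s v w
  have e1 : ∑ i ∈ s, v i ^ 2 = ∑ i ∈ s, v i * v i := by simp [sq]
  have e2 : ∑ i ∈ s, w i ^ 2 = ∑ i ∈ s, w i * w i := by simp [sq]
  rw [e1, e2] at hCS
  have hQnn : (0:ℝ) ≤ ∑ i ∈ s, w i * w i :=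
    Finset.sum_nonneg (fun i _ => mul_self_nonneg _)
  have hPnn : (0:ℝ) ≤ ∑ i ∈ s, v i * v i :=
    Finset.sum_nonneg (fun i _ => mul_self_nonneg _)
  have hP : ∑ i ∈ s, v i * v i ≤ v 0 * v 0 := by linarith [Ev ▸ hv]
  have hQ : ∑ i ∈ s, w i * w i ≤ w 0 * w 0 := by linarith [Ew ▸ hw]
  have hPQ : (∑ i ∈ s, v i * w i) ^ 2 ≤ (v 0 * v 0) * (w 0 * w 0) :=
    le_trans hCS (mul_le_mul hP hQ hQnn (by nlinarith))
  rw [Evw]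
  nlinarith [sq_nonneg (∑ i ∈ s, v i * w i - v 0 * w 0),
    sq_nonneg (∑ i ∈ s, v i * w i + v 0 * w 0),
    mul_nonneg hv0.le hw0]

private lemma causal_opp_pos {N : ℕ} (v w : Fin (N+1) → ℝ)
    (hv : mdot v v ≤ 0) (hv0 : 0 < v 0)
    (hw : mdot w w ≤ 0) (hvw : mdot v w < 0) : 0 < w 0 := by
  by_contra h
  push_neg at h
  have hnw : mdot (-w) (-w) ≤ 0 := by
    simpa [mdot, Matrix.mulVec_neg] using hw
  have heq : mdot v (-w) = -(mdot v w) := by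
    simp [mdot, Matrix.mulVec_neg]
  linarith [causal_mdot_nonpos v (-w) hv hv0 hnw (by simpa using h), heq]

private lemma Tbil_symm' {N : ℕ} (T : Matrix (Fin (N+1)) (Fin (N+1)) ℝ) (h : T.IsSymm)
    (v w : Fin (N+1) → ℝ) : Tbil T v w = Tbil T w v := by
  unfold Tbil
  rw [Matrix.dotProduct_mulVec, ← Matrix.mulVec_transpose, h.eq, dotProduct_comm]

private lemma mdot_endo {N : ℕ} (T : Matrix (Fin (N+1)) (Fin (N+1)) ℝ)
    (v w : Fin (N+1) → ℝ) : mdot (endo T v) w = -(Tbil T w v) := by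
  simp only [mdot, endo, Tbil, eta, Matrix.mulVec_diagonal, dotProduct,
    Pi.neg_apply, neg_mul]
  rw [← Finset.sum_neg_distrib]
  refine Finset.sum_congr rfl (fun i _ => ?_)
  by_cases h : i = 0 <;> simp [h] <;> ring

private lemma Tbil_expand {N : ℕ} (T : Matrix (Fin (N+1)) (Fin (N+1)) ℝ)
    (x y z w : Fin (N+1) → ℝ) (c d : ℝ) :
    Tbil T (x + c • y) (z + d • w) =
      Tbil T x z + d * Tbil T x w + c * Tbil T y z + c * d * Tbil T y w := by
  simp [Tbil, Matrix.mulVec_add, Matrix.mulVec_smul, add_dotProduct, dotProduct_add,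
    smul_dotProduct, dotProduct_smul, smul_eq_mul]
  ring

private lemma Tbil_add_smul_right {N : ℕ} (T : Matrix (Fin (N+1)) (Fin (N+1)) ℝ)
    (x z w : Fin (N+1) → ℝ) (d : ℝ) :
    Tbil T x (z + d • w) = Tbil T x z + d * Tbil T x w := by
  simp [Tbil, Matrix.mulVec_add, Matrix.mulVec_smul, dotProduct_add,
    dotProduct_smul, smul_eq_mul]

private lemma mdot_add_smul_right {N : ℕ} (x z w : Fin (N+1) → ℝ) (c : ℝ) :
    mdot x (z + c • w) = mdot x z + c * mdot x w := by
  simp [mdot, Matrix.mulVec_add, Matrix.mulVec_smul, dotProduct_add,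
    dotProduct_smul, smul_eq_mul]

private lemma mdot_add_smul_left {N : ℕ} (x y z : Fin (N+1) → ℝ) (c : ℝ) :
    mdot (x + c • y) z = mdot x z + c * mdot y z := by
  simp [mdot, add_dotProduct, smul_dotProduct, smul_eq_mul]

private lemma mdot_add_smul_both {N : ℕ} (x y : Fin (N+1) → ℝ) (c : ℝ) :
    mdot (x + c • y) (x + c • y)
      = mdot x x + c * mdot x y + c * mdot y x + c * c * mdot y y := by
  simp [mdot, Matrix.mulVec_add, Matrix.mulVec_smul, add_dotProduct, dotProduct_add,
    smul_dotProduct, dotProduct_smul, smul_eq_mul]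
  ring

end AuxLemmas

/-- In any orthonormal frame with `e₀` future-directed timelike, the frame
components of a stress-energy tensor satisfying the dominant energy condition
obey `|T^{ab}| ≤ T^{00}`. -/
theorem dec_frame_components {N : ℕ} (hN : 1 ≤ N)
    (T : Matrix (Fin (N+1)) (Fin (N+1)) ℝ) (hsymm : T.IsSymm)
    (hdec : DEC T)
    (e : Fin (N+1) → (Fin (N+1) → ℝ))
    (horth : ∀ a b : Fin (N+1),
      mdot (e a) (e b) = if a = b then (if a = 0 then (-1 : ℝ) else 1) else 0)
    (hfd : 0 < e 0 0) :
    ∀ a b : Fin (N+1), |Tbil T (e a) (e b)| ≤ Tbil T (e 0) (e 0) := by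
  have facts : ∀ v : Fin (N+1) → ℝ, FDCausal v → mdot v v ≤ 0 ∧ 0 < v 0 := by
    rintro v (⟨h1, h2⟩ | ⟨_, h1, h2⟩)
    · exact ⟨le_of_lt h1, h2⟩
    · exact ⟨le_of_eq h1, h2⟩
  have key : ∀ v w : Fin (N+1) → ℝ, FDCausal v → FDCausal w → 0 ≤ Tbil T w v := by
    intro v w hv hw
    rcases hdec v hv with h | h
    · have h1 : mdot (endo T v) w ≤ 0 :=
        causal_mdot_nonpos _ _ (facts _ h).1 (facts _ h).2 (facts _ hw).1 (facts _ hw).2.le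
      rw [mdot_endo] at h1
      linarith
    · have h1 := mdot_endo T v w
      rw [h] at h1
      have h2 : mdot (0 : Fin (N+1) → ℝ) w = 0 := by simp [mdot]
      rw [h2] at h1
      linarith
  have horth00 : mdot (e 0) (e 0) = -1 := by simpa using horth 0 0
  have he0 : FDCausal (e 0) := Or.inl ⟨by rw [horth00]; norm_num, hfd⟩
  have hnull : ∀ a : Fin (N+1), a ≠ 0 → ∀ σ : ℝ, σ * σ = 1 →
      FDCausal (e 0 + σ • e a) := by
    intro a ha σ hσ
    set v := e 0 + σ • e a with hv
    have hvv : mdot v v = 0 := by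
      rw [hv, mdot_add_smul_both, horth00, horth 0 a, horth a 0, horth a a,
        if_neg (Ne.symm ha), if_pos rfl, if_neg ha, if_neg ha]
      linear_combination hσ
    have h0v : mdot (e 0) v = -1 := by
      rw [hv, mdot_add_smul_right, horth00, horth 0 a, if_neg (Ne.symm ha)]
      ring
    have hvne : v ≠ 0 := by
      intro h0
      rw [h0] at h0v
      simp [mdot, Matrix.mulVec_zero] at h0v
    have hv0 : 0 < v 0 :=
      causal_opp_pos (e 0) v (by rw [horth00]; norm_num) hfd (le_of_eq hvv)
        (by rw [h0v]; norm_num)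
    exact Or.inr ⟨hvne, hvv, hv0⟩
  have hsym := Tbil_symm' T hsymm
  intro a b
  by_cases ha : a = 0 <;> by_cases hb : b = 0
  · subst ha; subst hb
    rw [abs_of_nonneg (key _ _ he0 he0)]
  · subst ha
    have h1 := key _ _ (hnull b hb 1 (by norm_num)) he0
    have h2 := key _ _ (hnull b hb (-1) (by norm_num)) he0
    rw [Tbil_add_smul_right] at h1 h2
    rw [abs_le]
    constructor <;> linarith
  · subst hb
    rw [hsym (e a) (e 0)]
    have h1 := key _ _ (hnull a ha 1 (by norm_num)) he0
    have h2 := key _ _ (hnull a ha (-1) (by norm_num)) he0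
    rw [Tbil_add_smul_right] at h1 h2
    rw [abs_le]
    constructor <;> linarith
  · have h11 := key _ _ (hnull a ha 1 (by norm_num)) (hnull b hb 1 (by norm_num))
    have h1m := key _ _ (hnull a ha 1 (by norm_num)) (hnull b hb (-1) (by norm_num))
    have hm1 := key _ _ (hnull a ha (-1) (by norm_num)) (hnull b hb 1 (by norm_num))
    have hmm := key _ _ (hnull a ha (-1) (by norm_num)) (hnull b hb (-1) (by norm_num))
    rw [Tbil_expand, hsym (e b) (e a)] at h11 h1m hm1 hmm
    rw [abs_le]
    constructor <;> linarith
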